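/- Fix n ∈ ℕ and work in M := Matrix (Fin n → Fin 2) (Fin n → Fin 2) ℂ, with the tensor product T(O) a b = ∏_{i} (O i)(a i)(b i) for O : Fin n → Matrix (Fin 2) (Fin 2) ℂ, and the permutation operator Q(π) a b = (if a = b ∘ π⁻¹ then 1 else 0) for a permutation π of Fin n. Let C : Fin n → Matrix (Fin 2) (Fin 2) ℂ with each C i invertible, let π be a permutation of Fin n, and let O : Fin n → Matrix (Fin 2) (Fin 2) ℂ. Then (T(C) * Q(π)) * T(O) * (T(C) * Q(π))⁻¹ = T(O') where O' i = (C i) * O (π⁻¹ i) * (C i)⁻¹; moreover the weight is preserved: the number of indices i for which O' i is a scalar multiple of the 2×2 identity equals the number of indices i for which O i is a scalar multiple of the 2×2 identity. -/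

import Mathlib

/-- The `n`-fold tensor (Kronecker) product of single-qubit operators,
realized concretely on the index type `Fin n → Fin 2`. -/
def tensorOp (n : ℕ) (O : Fin n → Matrix (Fin 2) (Fin 2) ℂ) :
    Matrix (Fin n → Fin 2) (Fin n → Fin 2) ℂ :=
  fun a b => ∏ i, O i (a i) (b i)

/-- The operator permuting the `n` tensor factors according to `π`. -/
def permOp (n : ℕ) (π : Equiv.Perm (Fin n)) :
    Matrix (Fin n → Fin 2) (Fin n → Fin 2) ℂ :=
  fun a b => if a = b ∘ ⇑π⁻¹ then 1 else 0

lemma tensorOp_mul (n : ℕ) (A B : Fin n → Matrix (Fin 2) (Fin 2) ℂ) :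
    tensorOp n A * tensorOp n B = tensorOp n (fun i => A i * B i) := by
  ext a b
  simp only [tensorOp, Matrix.mul_apply]
  rw [Fintype.prod_sum (fun i x => A i (a i) x * B i x (b i))]
  exact Finset.sum_congr rfl fun x _ => (Finset.prod_mul_distrib).symm

lemma tensorOp_one (n : ℕ) : tensorOp n (fun _ => 1) = 1 := by
  ext a b
  simp only [tensorOp, Matrix.one_apply]
  by_cases h : a = b
  · subst h; simp
  · rw [if_neg h]
    obtain ⟨i, hi⟩ := Function.ne_iff.mp h
    exact Finset.prod_eq_zero (Finset.mem_univ i) (by simp [Matrix.one_apply, hi])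

lemma perm_conj (n : ℕ) (π : Equiv.Perm (Fin n)) (O : Fin n → Matrix (Fin 2) (Fin 2) ℂ) :
    permOp n π * tensorOp n O = tensorOp n (fun i => O (π⁻¹ i)) * permOp n π := by
  ext a b
  simp only [tensorOp, permOp, Matrix.mul_apply]
  rw [Finset.sum_eq_single (a ∘ ⇑π)]
  · rw [Finset.sum_eq_single (b ∘ ⇑π⁻¹)]
    · have h1 : a = (a ∘ ⇑π) ∘ ⇑π⁻¹ := by funext i; simp
      rw [if_pos h1, if_pos rfl, one_mul, mul_one]
      have := Equiv.prod_comp π⁻¹ (fun i => O i (a (π i)) (b i))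
      simp only [Equiv.Perm.inv_def, Equiv.apply_symm_apply] at this
      simp only [Function.comp]
      exact this.symm
    · intro c _ hc; rw [if_neg hc, mul_zero]
    · simp
  · intro c _ hc
    rw [if_neg, zero_mul]
    intro h; apply hc
    funext i; have := congrFun h (π i); simpa using this.symm
  · simp

lemma permOp_mul (n : ℕ) (π σ : Equiv.Perm (Fin n)) :
    permOp n π * permOp n σ = permOp n (π * σ) := by
  ext a b
  simp only [permOp, Matrix.mul_apply]
  rw [Finset.sum_eq_single (b ∘ ⇑σ⁻¹)]
  · rw [if_pos rfl, mul_one]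
    have : b ∘ ⇑(π * σ)⁻¹ = (b ∘ ⇑σ⁻¹) ∘ ⇑π⁻¹ := rfl
    rw [this]
  · intro c _ hc; rw [if_neg hc, mul_zero]
  · simp

lemma permOp_isUnit (n : ℕ) (π : Equiv.Perm (Fin n)) : IsUnit (permOp n π) := by
  have h1 : permOp n π * permOp n π⁻¹ = 1 := by
    rw [permOp_mul, mul_inv_cancel]
    ext a b
    simp [permOp, Matrix.one_apply, eq_comm]
  exact ⟨⟨_, _, h1, mul_eq_one_comm.mp h1⟩, rfl⟩

lemma tensorOp_isUnit (n : ℕ) (C : Fin n → Matrix (Fin 2) (Fin 2) ℂ)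
    (hC : ∀ i, IsUnit (C i)) : IsUnit (tensorOp n C) := by
  have h1 : tensorOp n C * tensorOp n (fun i => (C i)⁻¹) = 1 := by
    rw [tensorOp_mul]
    have : (fun i => C i * (C i)⁻¹) = fun _ : Fin n => (1 : Matrix (Fin 2) (Fin 2) ℂ) := by
      funext i
      exact Matrix.mul_nonsing_inv _ ((Matrix.isUnit_iff_isUnit_det _).mp (hC i))
    rw [this, tensorOp_one]
  exact ⟨⟨_, _, h1, mul_eq_one_comm.mp h1⟩, rfl⟩

lemma scalar_conj_iff (A X : Matrix (Fin 2) (Fin 2) ℂ) (hA : IsUnit A) (c : ℂ) :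
    A * X * A⁻¹ = c • 1 ↔ X = c • 1 := by
  have hd := (Matrix.isUnit_iff_isUnit_det _).mp hA
  constructor
  · intro h
    have e : A⁻¹ * (A * X * A⁻¹) * A = X := by
      rw [Matrix.mul_assoc A X A⁻¹, ← Matrix.mul_assoc A⁻¹, Matrix.nonsing_inv_mul _ hd,
        Matrix.one_mul, Matrix.mul_assoc, Matrix.nonsing_inv_mul _ hd, Matrix.mul_one]
    rw [← e, h, Matrix.mul_smul, Matrix.mul_one, Matrix.smul_mul,
      Matrix.nonsing_inv_mul _ hd]
  · intro h
    rw [h, Matrix.mul_smul, Matrix.mul_one, Matrix.smul_mul, Matrix.mul_nonsing_inv _ hd]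

open scoped Classical in
/-- Conjugation by an element `T(C)·Q(π)` of `PLC_n` maps a tensor-product
error `T(O)` to the tensor-product error `T(O')` with
`O' i = C i · O (π⁻¹ i) · (C i)⁻¹`, and preserves its weight: the number of
sites at which `O'` is a scalar multiple of the identity equals the number of
sites at which `O` is. -/
theorem stmt_16 (n : ℕ) (π : Equiv.Perm (Fin n))
    (C O : Fin n → Matrix (Fin 2) (Fin 2) ℂ) (hC : ∀ i, IsUnit (C i)) :
    (tensorOp n C * permOp n π) * tensorOp n O * (tensorOp n C * permOp n π)⁻¹ =
      tensorOp n (fun i => C i * O (π⁻¹ i) * (C i)⁻¹) ∧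
    (Finset.univ.filter fun i : Fin n =>
        ∃ c : ℂ, C i * O (π⁻¹ i) * (C i)⁻¹ =
          c • (1 : Matrix (Fin 2) (Fin 2) ℂ)).card =
      (Finset.univ.filter fun i : Fin n =>
        ∃ c : ℂ, O i = c • (1 : Matrix (Fin 2) (Fin 2) ℂ)).card := by
  have hM : IsUnit (tensorOp n C * permOp n π) :=
    (tensorOp_isUnit n C hC).mul (permOp_isUnit n π)
  constructor
  · have key : (tensorOp n C * permOp n π) * tensorOp n O =
        tensorOp n (fun i => C i * O (π⁻¹ i) * (C i)⁻¹) * (tensorOp n C * permOp n π) := by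
      have harg : (fun i => (C i * O (π⁻¹ i) * (C i)⁻¹) * C i)
          = fun i => C i * O (π⁻¹ i) := by
        funext i
        rw [Matrix.mul_assoc (C i * O (π⁻¹ i)),
          Matrix.nonsing_inv_mul _ ((Matrix.isUnit_iff_isUnit_det _).mp (hC i)), Matrix.mul_one]
      rw [mul_assoc, perm_conj, ← mul_assoc, tensorOp_mul, ← mul_assoc, tensorOp_mul, harg]
    rw [key, mul_assoc, Matrix.mul_nonsing_inv _ ((Matrix.isUnit_iff_isUnit_det _).mp hM),
      mul_one]
  · have hiff : ∀ i : Fin n, (∃ c : ℂ, C i * O (π⁻¹ i) * (C i)⁻¹ = c • 1) ↔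
        (∃ c : ℂ, O (π⁻¹ i) = c • 1) := fun i =>
      exists_congr fun c => scalar_conj_iff (C i) (O (π⁻¹ i)) (hC i) c
    simp only [hiff]
    apply Finset.card_bij (fun i _ => π⁻¹ i)
    · intro i hi
      simp only [Finset.mem_filter, Finset.mem_univ, true_and] at hi ⊢
      exact hi
    · intro i _ j _ h
      exact π⁻¹.injective h
    · intro j hj
      simp only [Finset.mem_filter, Finset.mem_univ, true_and] at hj ⊢
      exact ⟨π j, by simpa using hj, by simp⟩
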